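/- Let G : ℝ^N → ℝ^N be C¹ and κ-strongly monotone with unique zero u*. Let V(z) := (1/2)|G(z)|². Then along solutions of ż = -k G(z)(|G(z)|^{-α₁} + |G(z)|^{-α₂}) with k > 0, 0 < α₁ < 1, α₂ < 0, V satisfies dV/dt ≤ -kκ(c₁ V^{γ₁} + c₂ V^{γ₂}) for all z ≠ u*, where c₁ = 2^{(2-α₁)/2}, c₂ = 2^{(2-α₂)/2}, γ₁ = (2-α₁)/2 ∈ (1/2,1), γ₂ = (2-α₂)/2 > 1. -/

import Mathlib

open Real Filter Topology

lemma jac_mono {E : Type*} [NormedAddCommGroup E] [InnerProductSpace ℝ E]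
    (G : E → E) (hG : ContDiff ℝ 1 G) (κ : ℝ)
    (hmono : ∀ u₁ u₂, κ * ‖u₁ - u₂‖ ^ 2 ≤ (inner ℝ (u₁ - u₂) (G u₁ - G u₂) : ℝ))
    (x η : E) : κ * ‖η‖ ^ 2 ≤ (inner ℝ η (fderiv ℝ G x η) : ℝ) := by
  have hd : HasFDerivAt G (fderiv ℝ G x) x :=
    (hG.differentiable one_ne_zero x).hasFDerivAt
  have hline : HasDerivAt (fun t : ℝ => x + t • η) η 0 := by
    simpa using ((hasDerivAt_id (0:ℝ)).smul_const η).const_add x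
  have hcomp : HasDerivAt (fun t : ℝ => G (x + t • η)) (fderiv ℝ G x η) 0 := by
    have h0 : HasFDerivAt G (fderiv ℝ G x) (x + (0:ℝ) • η) := by simpa using hd
    exact h0.comp_hasDerivAt 0 hline
  have hφ : HasDerivAt (fun t : ℝ => (inner ℝ η (G (x + t • η)) : ℝ))
      ((inner ℝ η (fderiv ℝ G x η) : ℝ)) 0 := by
    have := (hasDerivAt_const (0:ℝ) η).inner ℝ hcomp
    simpa using this
  have hslope := hasDerivAt_iff_tendsto_slope.1 hφ
  have hslope' : Tendsto (slope (fun t : ℝ => (inner ℝ η (G (x + t • η)) : ℝ)) 0)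
      (𝓝[>] (0:ℝ)) (𝓝 ((inner ℝ η (fderiv ℝ G x η) : ℝ))) :=
    hslope.mono_left (nhdsWithin_mono 0 (fun t ht => ne_of_gt ht))
  refine ge_of_tendsto hslope' ?_
  filter_upwards [self_mem_nhdsWithin] with t (ht : 0 < t)
  have hm := hmono (x + t • η) x
  simp only [add_sub_cancel_left] at hm
  rw [norm_smul, real_inner_smul_left] at hm
  rw [Real.norm_eq_abs, abs_of_pos ht] at hm
  have key : κ * t * ‖η‖ ^ 2 ≤ (inner ℝ η (G (x + t • η) - G x) : ℝ) := by
    have h2 : κ * (t * ‖η‖) ^ 2 = t * (κ * t * ‖η‖ ^ 2) := by ring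
    rw [h2] at hm
    exact le_of_mul_le_mul_left hm ht
  rw [inner_sub_right] at key
  show κ * ‖η‖ ^ 2 ≤ slope _ 0 t
  rw [slope_def_field, sub_zero, le_div_iff₀ ht]
  simp only [zero_smul, add_zero]
  nlinarith [key]


lemma pow_helper (r α : ℝ) (hr : 0 < r) :
    (2:ℝ) ^ ((2 - α)/2) * ((1/2) * r ^ 2) ^ ((2 - α)/2) = r ^ (-α) * r ^ 2 := by
  have h2 : ((1/2:ℝ) * r ^ 2) ^ ((2 - α)/2)
      = (1/2:ℝ) ^ ((2 - α)/2) * (r ^ 2) ^ ((2 - α)/2) :=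
    Real.mul_rpow (by norm_num) (sq_nonneg r)
  rw [h2, ← mul_assoc, ← Real.mul_rpow (by norm_num) (by norm_num)]
  norm_num
  rw [← Real.rpow_natCast r 2, ← Real.rpow_mul hr.le, ← Real.rpow_add hr]
  congr 1
  push_cast
  ring

theorem monotone_game_lyapunov_inequality
    (N : ℕ) (G : EuclideanSpace ℝ (Fin N) → EuclideanSpace ℝ (Fin N))
    (ustar : EuclideanSpace ℝ (Fin N)) (κ k α₁ α₂ : ℝ)
    (hκ : 0 < κ) (hk : 0 < k) (hα₁ : 0 < α₁) (hα₁' : α₁ < 1) (hα₂ : α₂ < 0)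
    (hG : ContDiff ℝ 1 G)
    (hmono : ∀ u₁ u₂, κ * ‖u₁ - u₂‖ ^ 2 ≤ (inner ℝ (u₁ - u₂) (G u₁ - G u₂) : ℝ))
    (hzero : G ustar = 0)
    (z : ℝ → EuclideanSpace ℝ (Fin N))
    (hz : ∀ t, HasDerivAt z
      (-(k * (‖G (z t)‖ ^ (-α₁) + ‖G (z t)‖ ^ (-α₂))) • G (z t)) t) :
    (1 / 2 < (2 - α₁) / 2 ∧ (2 - α₁) / 2 < 1) ∧ 1 < (2 - α₂) / 2 ∧
    ∀ t, z t ≠ ustar →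
      ∃ d : ℝ, HasDerivAt (fun s => (1 / 2) * ‖G (z s)‖ ^ 2) d t ∧
        d ≤ -(k * κ) * ((2 : ℝ) ^ ((2 - α₁) / 2) * ((1 / 2) * ‖G (z t)‖ ^ 2) ^ ((2 - α₁) / 2)
                      + (2 : ℝ) ^ ((2 - α₂) / 2) * ((1 / 2) * ‖G (z t)‖ ^ 2) ^ ((2 - α₂) / 2)) := by
  refine ⟨⟨by linarith, by linarith⟩, by linarith, ?_⟩
  intro t hzt
  set r : ℝ := ‖G (z t)‖ with hr
  have hGzne : G (z t) ≠ 0 := by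
    intro h0
    apply hzt
    have := hmono (z t) ustar
    rw [h0, hzero, sub_zero, inner_zero_right] at this
    have hn : ‖z t - ustar‖ ^ 2 ≤ 0 := by nlinarith
    have h2 : ‖z t - ustar‖ ^ 2 = 0 := le_antisymm hn (sq_nonneg _)
    have h3 : ‖z t - ustar‖ = 0 := by
      have := pow_eq_zero_iff (n := 2) (by norm_num) |>.1 h2
      exact this
    exact sub_eq_zero.1 (norm_eq_zero.1 h3)
  have hrpos : 0 < r := norm_pos_iff.2 hGzne
  set c : ℝ := k * (r ^ (-α₁) + r ^ (-α₂)) with hc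
  have hcpos : 0 < c := by
    have h1 : 0 < r ^ (-α₁) := Real.rpow_pos_of_pos hrpos _
    have h2 : 0 < r ^ (-α₂) := Real.rpow_pos_of_pos hrpos _
    positivity
  have hGd : HasFDerivAt G (fderiv ℝ G (z t)) (z t) :=
    (hG.differentiable one_ne_zero (z t)).hasFDerivAt
  set w : EuclideanSpace ℝ (Fin N) := fderiv ℝ G (z t) (G (z t)) with hw
  have hGz : HasDerivAt (fun s => G (z s)) (-c • w) t := by
    have := hGd.comp_hasDerivAt t (hz t)
    simpa [hw, map_smul, hc, hr, Function.comp_def, neg_smul] using this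
  refine ⟨-c * (inner ℝ (G (z t)) w : ℝ), ?_, ?_⟩
  · have hV : HasDerivAt (fun s => (1/2 : ℝ) * (inner ℝ (G (z s)) (G (z s)) : ℝ))
        ((1/2 : ℝ) * ((inner ℝ (G (z t)) (-c • w) : ℝ) + (inner ℝ (-c • w) (G (z t)) : ℝ))) t :=
      (hGz.inner ℝ hGz).const_mul _
    have heq : (fun s => (1/2 : ℝ) * (inner ℝ (G (z s)) (G (z s)) : ℝ))
        = fun s => (1/2 : ℝ) * ‖G (z s)‖ ^ 2 := by
      funext s; rw [real_inner_self_eq_norm_sq]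
    rw [heq] at hV
    have hdval : (1/2 : ℝ) * ((inner ℝ (G (z t)) (-c • w) : ℝ) + (inner ℝ (-c • w) (G (z t)) : ℝ))
        = -c * (inner ℝ (G (z t)) w : ℝ) := by
      rw [real_inner_smul_right, real_inner_smul_left, real_inner_comm]
      ring
    rwa [hdval] at hV
  · have hjac : κ * r ^ 2 ≤ (inner ℝ (G (z t)) w : ℝ) :=
      jac_mono G hG κ hmono (z t) (G (z t))
    have hRHS : -(k * κ) * ((2 : ℝ) ^ ((2 - α₁) / 2) * ((1 / 2) * r ^ 2) ^ ((2 - α₁) / 2)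
          + (2 : ℝ) ^ ((2 - α₂) / 2) * ((1 / 2) * r ^ 2) ^ ((2 - α₂) / 2))
        = -c * (κ * r ^ 2) := by
      rw [pow_helper r α₁ hrpos, pow_helper r α₂ hrpos, hc]
      ring
    rw [hRHS]
    have := mul_le_mul_of_nonpos_left hjac (neg_nonpos.2 hcpos.le)
    linarith
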